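/- Fix h ∈ ℝ with κ(h) > 0, M ≥ 0, f ∈ C(M), and set δ = min{1/8, 1/(8|h|), 1/(8M)}. Let μ ∈ ℝ and let φ ∈ C²([0,1]) satisfy φ(0) = 0, φ'(0) = 1, φ''(0) = 0, φ > 0 on (0,1], u(r) = rφ'(r)/φ(r) ∈ U(δ) for all r ∈ [0,1], and the equation φ''(r) + (2/r)(φ'(r) − φ(r)/r) = V₁(u(r)) (1/r)(φ'(r) − φ(r)/r) + μ (κ(h) + β(f))^{−1} r v(r)^{1−h/3} V₂(u(r)) for r ∈ (0,1], where v(r) = φ'(r)(φ(r)/r)². If μ > 0, then φ'(r) > φ(r)/r > 1 for all r ∈ (0,1]; if μ < 0, then φ'(r) < φ(r)/r < 1 for all r ∈ (0,1]. -/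

import Mathlib

open Set

noncomputable section

/-- `κ(h) = (h/3)(h/3 − 1)`. -/
def kap (h : ℝ) : ℝ := (h / 3) * (h / 3 - 1)

/-- The interval `U(1/8) = [7/8, 9/8]`. -/
def Iset : Set ℝ := Set.Icc (7/8 : ℝ) (9/8)

/-- The interval `U(a) = {u : |u − 1| ≤ a}`. -/
def Uset (a : ℝ) : Set ℝ := Set.Icc (1 - a) (1 + a)

/-- First derivative of `f` on `U(1/8)`. -/
noncomputable def d1 (f : ℝ → ℝ) : ℝ → ℝ := derivWithin f Iset

/-- Second derivative of `f` on `U(1/8)`. -/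
noncomputable def d2 (f : ℝ → ℝ) : ℝ → ℝ := derivWithin (d1 f) Iset

/-- Third derivative of `f` on `U(1/8)`. -/
noncomputable def d3 (f : ℝ → ℝ) : ℝ → ℝ := derivWithin (d2 f) Iset

/-- The class `C(M)`: `f` is C³ on `U(1/8)`, `f(1) = 1`, `f'(1) = 0`, `f''(1) > 0`,
and `|f'''| ≤ M f''(1)` on `U(1/8)`. -/
def CM (M : ℝ) (f : ℝ → ℝ) : Prop :=
  ContDiffOn ℝ 3 f Iset ∧ f 1 = 1 ∧ d1 f 1 = 0 ∧ 0 < d2 f 1 ∧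
    ∀ u ∈ Iset, |d3 f u| ≤ M * d2 f 1

/-- `δ = min{1/8, 1/(8|h|), 1/(8M)}`, where for `M = 0` the term `1/(8M)` is
interpreted as `+∞`. -/
noncomputable def del (h M : ℝ) : ℝ :=
  if M = 0 then min (1/8) (1 / (8 * |h|))
  else min (1/8) (min (1 / (8 * |h|)) (1 / (8 * M)))

/-- The quotient `f'(u)/(u−1)`, extended continuously at `u = 1` by `f''(1)`. -/
noncomputable def Qf (f : ℝ → ℝ) (u : ℝ) : ℝ :=
  if u = 1 then d2 f 1 else d1 f u / (u - 1)

/-- `U₁(u) = κ(h)f(u) + (2h/3)uf'(u) + u²f''(u)`. -/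
noncomputable def U1 (h : ℝ) (f : ℝ → ℝ) (u : ℝ) : ℝ :=
  kap h * f u + (2 * h / 3) * u * d1 f u + u ^ 2 * d2 f u

/-- `U₂(u) = 2κ(h)uf(u) + (h/3 − 1)u²f'(u) + (2u² + u³)f'(u)/(u−1) − u³f''(u)`. -/
noncomputable def U2 (h : ℝ) (f : ℝ → ℝ) (u : ℝ) : ℝ :=
  2 * kap h * u * f u + (h / 3 - 1) * u ^ 2 * d1 f u
    + (2 * u ^ 2 + u ^ 3) * Qf f u - u ^ 3 * d2 f u

/-- `V₁(u) = (2U₁(u) − U₂(u))/U₁(u)`. -/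
noncomputable def V1 (h : ℝ) (f : ℝ → ℝ) (u : ℝ) : ℝ :=
  (2 * U1 h f u - U2 h f u) / U1 h f u

/-- `V₂(u) = (κ(h) + β(f)) u / U₁(u)`. -/
noncomputable def V2 (h : ℝ) (f : ℝ → ℝ) (u : ℝ) : ℝ :=
  (kap h + d2 f 1) * u / U1 h f u

/-- `λ₁(r) = φ'(r)` (derivative within `[0,1]`). -/
noncomputable def lam1 (φ : ℝ → ℝ) : ℝ → ℝ := derivWithin φ (Set.Icc 0 1)

/-- `λ₂(r) = φ(r)/r`, with the convention `φ(r)/r = 1` at `r = 0`. -/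
noncomputable def lam2 (φ : ℝ → ℝ) (r : ℝ) : ℝ := if r = 0 then 1 else φ r / r

/-- `u(r) = rφ'(r)/φ(r) = λ₁(r)/λ₂(r)`. -/
noncomputable def uu (φ : ℝ → ℝ) (r : ℝ) : ℝ := lam1 φ r / lam2 φ r

/-- `v(r) = φ'(r)(φ(r)/r)² = λ₁(r)λ₂(r)²`. -/
noncomputable def vv (φ : ℝ → ℝ) (r : ℝ) : ℝ := lam1 φ r * (lam2 φ r) ^ 2

lemma absMulLe {x y X Y : ℝ} (hx : |x| ≤ X) (hy : |y| ≤ Y) : |x * y| ≤ X * Y := by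
  rw [abs_mul]
  exact mul_le_mul hx hy (abs_nonneg _) ((abs_nonneg x).trans hx)

lemma posAux (ψ g a : ℝ → ℝ)
    (hc : ContinuousOn ψ (Set.Icc 0 1)) (h0 : ψ 0 = 0)
    (hd : ∀ r ∈ Set.Ioc (0:ℝ) 1, HasDerivWithinAt ψ (a r * ψ r + g r) (Set.Icc 0 1) r)
    (ha : ∀ r ∈ Set.Ioc (0:ℝ) 1, a r ≤ 0)
    (hg : ∀ r ∈ Set.Ioc (0:ℝ) 1, 0 < g r) :
    ∀ r ∈ Set.Ioc (0:ℝ) 1, 0 < ψ r := by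
  have key : ∀ r₁ ∈ Set.Ioc (0:ℝ) 1, ¬ ψ r₁ < 0 := by
    intro r₁ hr₁ hneg
    have hIccsub : Set.Icc 0 r₁ ⊆ Set.Icc (0:ℝ) 1 := Icc_subset_Icc le_rfl hr₁.2
    set S : Set ℝ := Set.Icc 0 r₁ ∩ ψ ⁻¹' (Set.Ici 0) with hS
    have hS0 : (0:ℝ) ∈ S := ⟨⟨le_rfl, hr₁.1.le⟩, by simp [h0]⟩
    have hSne : S.Nonempty := ⟨0, hS0⟩
    have hSbdd : BddAbove S := BddAbove.mono (fun x hx => hx.1) bddAbove_Icc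
    have hSclosed : IsClosed S :=
      (hc.mono hIccsub).preimage_isClosed_of_isClosed isClosed_Icc isClosed_Ici
    set r₂ := sSup S with hr₂def
    have hr₂S : r₂ ∈ S := hSclosed.csSup_mem hSne hSbdd
    have hr₂mem : r₂ ∈ Set.Icc 0 r₁ := hr₂S.1
    have hψr₂ : 0 ≤ ψ r₂ := hr₂S.2
    have hr₂lt : r₂ < r₁ := by
      rcases lt_or_eq_of_le hr₂mem.2 with hlt | heq
      · exact hlt
      · exfalso; rw [heq] at hψr₂; linarith
    have hnegOn : ∀ x ∈ Set.Ioc r₂ r₁, ψ x < 0 := by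
      intro x hx
      by_contra hcon
      push_neg at hcon
      have : x ∈ S := ⟨⟨hr₂mem.1.trans hx.1.le, hx.2⟩, hcon⟩
      exact absurd (le_csSup hSbdd this) (not_le.2 hx.1)
    have hψr₂0 : ψ r₂ = 0 := by
      rcases eq_or_lt_of_le hψr₂ with heq | hlt
      · exact heq.symm
      · exfalso
        have hcw : ContinuousWithinAt ψ (Set.Icc 0 1) r₂ := hc r₂ (hIccsub hr₂mem)
        have hev : ∀ᶠ x in nhdsWithin r₂ (Set.Icc 0 1), 0 < ψ x :=
          hcw.eventually (eventually_gt_nhds hlt)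
        have hsub : Set.Ioo r₂ r₁ ⊆ Set.Icc 0 1 :=
          fun x hx => ⟨(hr₂mem.1).trans hx.1.le, hx.2.le.trans hr₁.2⟩
        have hne : (nhdsWithin r₂ (Set.Ioo r₂ r₁)).NeBot := by
          apply mem_closure_iff_nhdsWithin_neBot.1
          rw [closure_Ioo (ne_of_lt hr₂lt)]
          exact ⟨le_rfl, hr₂lt.le⟩
        have hev2 : ∀ᶠ x in nhdsWithin r₂ (Set.Ioo r₂ r₁), 0 < ψ x :=
          hev.filter_mono (nhdsWithin_mono _ hsub)
        obtain ⟨x, hxpos, hx⟩ := (hev2.and eventually_mem_nhdsWithin).exists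
        exact absurd hxpos (not_lt.2 (hnegOn x ⟨hx.1, hx.2.le⟩).le)
    -- strict mono on [r₂, r₁] since derivative positive there
    have hmono : StrictMonoOn ψ (Set.Icc r₂ r₁) := by
      apply strictMonoOn_of_deriv_pos (convex_Icc _ _)
      · exact hc.mono (Icc_subset_Icc hr₂mem.1 hr₁.2)
      · intro x hx
        rw [interior_Icc] at hx
        have hxIoc : x ∈ Set.Ioc (0:ℝ) 1 :=
          ⟨lt_of_le_of_lt hr₂mem.1 hx.1, hx.2.le.trans hr₁.2⟩
        have hmem : Set.Icc (0:ℝ) 1 ∈ nhds x := by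
          apply Icc_mem_nhds
          · exact lt_of_le_of_lt hr₂mem.1 hx.1
          · exact lt_of_lt_of_le hx.2 hr₁.2
        have hda : HasDerivAt ψ (a x * ψ x + g x) x := (hd x hxIoc).hasDerivAt hmem
        rw [hda.deriv]
        have hψx : ψ x < 0 := hnegOn x ⟨hx.1, hx.2.le⟩
        have : 0 ≤ a x * ψ x := mul_nonneg_of_nonpos_of_nonpos (ha x hxIoc) hψx.le
        linarith [hg x hxIoc]
    have := hmono (left_mem_Icc.2 hr₂lt.le) (right_mem_Icc.2 hr₂lt.le) hr₂lt
    rw [hψr₂0] at this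
    linarith
  -- now rule out ψ r = 0
  intro r hr
  rcases lt_trichotomy (ψ r) 0 with hlt | heq | hpos
  · exact absurd hlt (key r hr)
  · exfalso
    have hder := hd r hr
    rw [heq, mul_zero, zero_add] at hder
    have hgr := hg r hr
    rw [hasDerivWithinAt_iff_tendsto_slope] at hder
    have hev : ∀ᶠ x in nhdsWithin r (Set.Icc 0 1 \ {r}), 0 < slope ψ r x :=
      hder.eventually (eventually_gt_nhds hgr)
    have hsub : Set.Ioo (r/2) r ⊆ Set.Icc 0 1 \ {r} := by
      intro x hx
      constructor
      · exact ⟨le_of_lt (lt_trans (by linarith [hr.1] : (0:ℝ) < r/2) hx.1),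
          hx.2.le.trans hr.2⟩
      · exact ne_of_lt hx.2
    have hne : (nhdsWithin r (Set.Ioo (r/2) r)).NeBot := by
      apply mem_closure_iff_nhdsWithin_neBot.1
      rw [closure_Ioo (by linarith [hr.1] : r/2 ≠ r)]
      exact ⟨(by linarith [hr.1] : r/2 ≤ r), le_rfl⟩
    have hev2 : ∀ᶠ x in nhdsWithin r (Set.Ioo (r/2) r), 0 < slope ψ r x :=
      hev.filter_mono (nhdsWithin_mono _ hsub)
    obtain ⟨x, hxslope, hx⟩ := (hev2.and eventually_mem_nhdsWithin).exists
    have hxr : x - r < 0 := by linarith [hx.2]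
    have : ψ x < 0 := by
      have hsl : slope ψ r x = (ψ x - ψ r) / (x - r) := slope_def_field ψ r x ▸ rfl
      rw [slope_def_field] at hxslope
      have := div_pos_iff.1 hxslope
      rcases this with ⟨hnum, hden⟩ | ⟨hnum, hden⟩
      · linarith
      · rw [heq] at hnum; linarith
    exact absurd this (key x ⟨by linarith [hr.1, hx.1], hx.2.le.trans hr.2⟩)
  · exact hpos

lemma delFacts (h M : ℝ) (hh : h ≠ 0) (hM : 0 ≤ M) :
    0 < del h M ∧ del h M ≤ 1/8 ∧ |h| * del h M ≤ 1/8 ∧ M * del h M ≤ 1/8 := by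
  have hH : 0 < |h| := abs_pos.2 hh
  have h1 : (0:ℝ) < 1 / (8 * |h|) := by positivity
  rcases eq_or_ne M 0 with hM0 | hM0
  · simp only [del, hM0, if_true, eq_self_iff_true]
    refine ⟨lt_min (by norm_num) h1, min_le_left _ _, ?_, by simp⟩
    have h2 : min (1/8) (1 / (8 * |h|)) ≤ 1 / (8 * |h|) := min_le_right _ _
    rw [le_div_iff₀ (by positivity : (0:ℝ) < 8 * |h|)] at h2
    nlinarith [min_le_left (1/8 : ℝ) (1 / (8 * |h|)), hH.le]
  · have hMpos : 0 < M := lt_of_le_of_ne hM (Ne.symm hM0)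
    simp only [del, if_neg hM0]
    have h2 : min (1/8) (min (1 / (8 * |h|)) (1 / (8 * M))) ≤ 1 / (8 * |h|) :=
      (min_le_right _ _).trans (min_le_left _ _)
    have h3 : min (1/8) (min (1 / (8 * |h|)) (1 / (8 * M))) ≤ 1 / (8 * M) :=
      (min_le_right _ _).trans (min_le_right _ _)
    refine ⟨lt_min (by norm_num) (lt_min h1 (by positivity)), min_le_left _ _, ?_, ?_⟩
    · rw [le_div_iff₀ (by positivity : (0:ℝ) < 8 * |h|)] at h2; nlinarith
    · rw [le_div_iff₀ (by positivity : (0:ℝ) < 8 * M)] at h3; nlinarith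

lemma deriv_chain (f : ℝ → ℝ) (hf3 : ContDiffOn ℝ 3 f Iset) {s : Set ℝ} (hs : s ⊆ Iset) :
    (∀ x ∈ s, HasDerivWithinAt f (d1 f x) s x) ∧
    (∀ x ∈ s, HasDerivWithinAt (d1 f) (d2 f x) s x) ∧
    (∀ x ∈ s, HasDerivWithinAt (d2 f) (d3 f x) s x) := by
  have hud : UniqueDiffOn ℝ Iset := uniqueDiffOn_Icc (by norm_num)
  have h1 : ContDiffOn ℝ 2 (d1 f) Iset := hf3.derivWithin hud (by norm_num)
  have h2 : ContDiffOn ℝ 1 (d2 f) Iset := h1.derivWithin hud (by norm_num)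
  refine ⟨fun x hx => ?_, fun x hx => ?_, fun x hx => ?_⟩
  · exact ((hf3.differentiableOn (by norm_num) x (hs hx)).hasDerivWithinAt).mono hs
  · exact ((h1.differentiableOn (by norm_num) x (hs hx)).hasDerivWithinAt).mono hs
  · exact ((h2.differentiableOn (by norm_num) x (hs hx)).hasDerivWithinAt).mono hs

set_option maxHeartbeats 1000000 in
lemma fBounds (h M : ℝ) (f : ℝ → ℝ) (hκ : 0 < kap h) (hM : 0 ≤ M) (hf : CM M f)
    (hh : h ≠ 0) :
    ∀ u ∈ Uset (del h M),
      kap h + (285/512) * d2 f 1 ≤ U1 h f u ∧ V1 h f u ≤ 3 := by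
  obtain ⟨hδ0, hδ8, hhδ, hMδ⟩ := delFacts h M hh hM
  set δ := del h M with hδdef
  set β := d2 f 1 with hβdef
  have hβ : 0 < β := hf.2.2.2.1
  have hsub : Uset δ ⊆ Iset := by
    intro x hx
    simp only [Uset, mem_Icc] at hx
    simp only [Iset, mem_Icc]
    constructor <;> linarith
  obtain ⟨hD0, hD1, hD2⟩ := deriv_chain f hf.1 hsub
  have hconv : Convex ℝ (Uset δ) := convex_Icc _ _
  have h1mem : (1:ℝ) ∈ Uset δ := by simp only [Uset, mem_Icc]; constructor <;> linarith
  have hd3b : ∀ x ∈ Uset δ, ‖d3 f x‖ ≤ M * β := fun x hx => by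
    rw [Real.norm_eq_abs]; exact hf.2.2.2.2 x (hsub hx)
  have habs1 : ∀ x ∈ Uset δ, |x - 1| ≤ δ := by
    intro x hx; simp only [Uset, mem_Icc] at hx
    rw [abs_le]; constructor <;> linarith
  have hMβδ : M * β * δ ≤ (1/8) * β := by nlinarith
  have hmul : ∀ x ∈ Uset δ, M * β * |x - 1| ≤ M * β * δ := fun x hx =>
    mul_le_mul_of_nonneg_left (habs1 x hx) (mul_nonneg hM hβ.le)
  -- second derivative estimate
  have A1 : ∀ x ∈ Uset δ, |d2 f x - β| ≤ (1/8) * β := by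
    intro x hx
    have := hconv.norm_image_sub_le_of_norm_hasDerivWithin_le hD2 hd3b h1mem hx
    rw [Real.norm_eq_abs, Real.norm_eq_abs] at this
    calc |d2 f x - β| ≤ M * β * |x - 1| := this
      _ ≤ M * β * δ := hmul x hx
      _ ≤ (1/8) * β := hMβδ
  have A1' : ∀ x ∈ Uset δ, ‖d2 f x‖ ≤ (9/8) * β := by
    intro x hx
    have := A1 x hx
    rw [Real.norm_eq_abs, abs_le]; rw [abs_le] at this
    constructor <;> [linarith [this.1]; linarith [this.2]]
  -- first derivative estimate
  have A2 : ∀ x ∈ Uset δ, |d1 f x| ≤ (9/8) * β * δ := by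
    intro x hx
    have := hconv.norm_image_sub_le_of_norm_hasDerivWithin_le hD1 A1' h1mem hx
    rw [Real.norm_eq_abs, Real.norm_eq_abs, hf.2.2.1, sub_zero] at this
    calc |d1 f x| ≤ 9/8 * β * |x - 1| := this
      _ ≤ 9/8 * β * δ := by have := habs1 x hx; nlinarith [abs_nonneg (x-1)]
  have A2' : ∀ x ∈ Uset δ, ‖d1 f x‖ ≤ (9/8) * β * δ := fun x hx => by
    rw [Real.norm_eq_abs]; exact A2 x hx
  -- zeroth order estimate
  have A3 : ∀ x ∈ Uset δ, |f x - 1| ≤ (9/8) * β * δ * δ := by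
    intro x hx
    have := hconv.norm_image_sub_le_of_norm_hasDerivWithin_le hD0 A2' h1mem hx
    rw [Real.norm_eq_abs, Real.norm_eq_abs, hf.2.1] at this
    calc |f x - 1| ≤ 9/8 * β * δ * |x - 1| := this
      _ ≤ 9/8 * β * δ * δ := by
          have := habs1 x hx
          nlinarith [abs_nonneg (x-1), mul_nonneg (mul_nonneg (by linarith : (0:ℝ) ≤ 9/8 * β) hδ0.le) hδ0.le]
  -- Qf estimate
  have A4 : ∀ x ∈ Uset δ, |Qf f x - β| ≤ (1/8) * β := by
    intro x hx
    rcases eq_or_ne x 1 with rfl | hx1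
    · simp only [Qf, if_true, eq_self_iff_true, ← hβdef, sub_self, abs_zero]; linarith
    · have hDg : ∀ y ∈ Uset δ, HasDerivWithinAt (fun y => d1 f y - β * (y - 1))
          (d2 f y - β) (Uset δ) y := by
        intro y hy
        have h2 : HasDerivWithinAt (fun y : ℝ => β * (y - 1)) (β * 1) (Uset δ) y :=
          ((hasDerivWithinAt_id y _).sub_const 1).const_mul β
        exact ((hD1 y hy).sub h2).congr_deriv (by ring)
      have hgb : ∀ y ∈ Uset δ, ‖d2 f y - β‖ ≤ M * β * δ := by
        intro y hy
        rw [Real.norm_eq_abs]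
        have := hconv.norm_image_sub_le_of_norm_hasDerivWithin_le hD2 hd3b h1mem hy
        rw [Real.norm_eq_abs, Real.norm_eq_abs] at this
        calc |d2 f y - β| ≤ M * β * |y - 1| := this
          _ ≤ M * β * δ := hmul y hy
      have := hconv.norm_image_sub_le_of_norm_hasDerivWithin_le hDg hgb h1mem hx
      rw [Real.norm_eq_abs, Real.norm_eq_abs, hf.2.2.1] at this
      simp only [sub_self, mul_zero, zero_mul, sub_zero, zero_sub, mul_one] at this
      -- this : |d1 f x - β * (x - 1)| ≤ M * β * δ * |x - 1|
      have hne : x - 1 ≠ 0 := sub_ne_zero.2 hx1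
      have habs : 0 < |x - 1| := abs_pos.2 hne
      have hQ : Qf f x - β = (d1 f x - β * (x - 1)) / (x - 1) := by
        simp only [Qf, if_neg hx1, ← hβdef]
        field_simp
      rw [hQ, abs_div]
      rw [div_le_iff₀ habs]
      calc |d1 f x - β * (x - 1)| ≤ M * β * δ * |x - 1| := this
        _ ≤ (1/8) * β * |x - 1| := by nlinarith
  -- κδ² bound
  have hκδ2 : kap h * δ^2 ≤ 1/144 := by
    have e1 : h*h*(δ*δ) ≤ 1/64 := by
      have e0 : (abs h*δ)*(abs h*δ) ≤ 1/64 := by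
        have := mul_le_mul hhδ hhδ (by positivity : (0:ℝ) ≤ abs h*δ)
          (by norm_num : (0:ℝ) ≤ 1/8)
        linarith
      calc h*h*(δ*δ) = (abs h*δ)*(abs h*δ) := by linear_combination (-(δ*δ)) * abs_mul_abs_self h
        _ ≤ 1/64 := e0
    have e2 : (-h)*(δ*δ) ≤ 1/64 := by
      have h2 : -h ≤ |h| := neg_le_abs h
      have h3 : (-h)*(δ*δ) ≤ abs h*(δ*δ) := mul_le_mul_of_nonneg_right h2 (by positivity)
      have h4 : abs h*δ*δ ≤ (1/8)*δ := mul_le_mul_of_nonneg_right hhδ hδ0.le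
      nlinarith
    have e3 : kap h * δ^2 = h*h*(δ*δ)/9 + (-h)*(δ*δ)/3 := by simp only [kap]; ring
    linarith
  intro u hu
  have hu78 : 7/8 ≤ u ∧ u ≤ 9/8 := by
    have := hsub hu; simpa only [Iset, mem_Icc] using this
  set A := f u with hA
  set B := d1 f u with hB
  set C := d2 f u with hC
  set Q := Qf f u with hQ
  have hAb : |A - 1| ≤ 9/8*β*δ*δ := A3 u hu
  have hBb : |B| ≤ 9/8*β*δ := A2 u hu
  have hCb : |C - β| ≤ 1/8*β := A1 u hu
  have hQb : |Q - β| ≤ 1/8*β := A4 u hu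
  have hupos : (0:ℝ) < u := by linarith [hu78.1]
  have hu' : |u| ≤ 9/8 := by rw [abs_of_pos hupos]; exact hu78.2
  -- lower bound for U1
  have p1 : |kap h * (A - 1)| ≤ (1/128)*β := by
    rw [abs_mul, abs_of_pos hκ]
    calc kap h * |A - 1| ≤ kap h * (9/8*β*δ*δ) := mul_le_mul_of_nonneg_left hAb hκ.le
      _ = (9/8)*β*(kap h * δ^2) := by ring
      _ ≤ (9/8)*β*(1/144) := mul_le_mul_of_nonneg_left hκδ2 (by positivity)
      _ = (1/128)*β := by ring
  have p2 : |(2*h/3)*u*B| ≤ (27/256)*β := by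
    have e0 : |(2*h/3)| = 2*|h|/3 := by
      rw [show (2*h/3) = (2/3)*h by ring, abs_mul, abs_of_pos (by norm_num : (0:ℝ) < 2/3)]
      ring
    have e1 : |(2*h/3)*u| ≤ (2*|h|/3)*(9/8) := by
      rw [abs_mul, e0]
      exact mul_le_mul_of_nonneg_left hu' (by positivity)
    calc |(2*h/3)*u*B| ≤ ((2*|h|/3)*(9/8))*(9/8*β*δ) := absMulLe e1 hBb
      _ = (27/32)*((abs h*δ)*β) := by ring
      _ ≤ (27/32)*((1/8)*β) := by
          have := mul_le_mul_of_nonneg_right hhδ hβ.le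
          linarith
      _ = (27/256)*β := by ring
  have p3 : (343/512)*β ≤ u^2*C := by
    have hC' : 7/8*β ≤ C := by rw [abs_le] at hCb; linarith [hCb.1]
    have hu2 : 49/64 ≤ u^2 := by nlinarith [hu78.1]
    calc (343/512)*β = (49/64)*(7/8*β) := by ring
      _ ≤ u^2*(7/8*β) := mul_le_mul_of_nonneg_right hu2 (by positivity)
      _ ≤ u^2*C := mul_le_mul_of_nonneg_left hC' (by positivity)
  have hU1lower : kap h + (285/512)*β ≤ U1 h f u := by
    have hexp : U1 h f u = kap h + kap h*(A-1) + (2*h/3)*u*B + u^2*C := by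
      simp only [U1, ← hA, ← hB, ← hC]; ring
    rw [hexp]
    rw [abs_le] at p1 p2
    linarith [p1.1, p2.1]
  refine ⟨hU1lower, ?_⟩
  have hU1pos : 0 < U1 h f u := lt_of_lt_of_le (by positivity) hU1lower
  -- upper bound on 2U1 - U2
  have hTeq : 2*U1 h f u - U2 h f u
      = 2*kap h*A*(1-u) + ((4*h/3)*u - (h/3-1)*u^2)*B + (2*u^2+u^3)*(C-Q) := by
    simp only [U1, U2, ← hA, ← hB, ← hC, ← hQ]; ring
  have q1 : |2*kap h*A*(1-u)| ≤ (1/4)*kap h + (1/512)*β := by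
    have hAabs : |A| ≤ 1 + 9/8*β*δ*δ := by
      calc |A| = |(A-1) + 1| := by ring_nf
        _ ≤ |A-1| + |1| := abs_add_le _ _
        _ ≤ 1 + 9/8*β*δ*δ := by rw [abs_one]; linarith
    have h1u : |1-u| ≤ δ := by rw [abs_sub_comm]; exact habs1 u hu
    have e00 : |2*kap h| = 2*kap h := abs_of_pos (by linarith)
    calc |2*kap h*A*(1-u)| = |2*kap h| * |A| * |1-u| := by rw [abs_mul, abs_mul]
      _ ≤ (2*kap h)*(1 + 9/8*β*δ*δ)*δ := by
          rw [e00]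
          exact mul_le_mul (mul_le_mul_of_nonneg_left hAabs (by linarith)) h1u
            (abs_nonneg _) (by positivity)
      _ ≤ (1/4)*kap h + (1/512)*β := by
          have e1 : kap h * δ ≤ kap h * (1/8) := mul_le_mul_of_nonneg_left hδ8 hκ.le
          have e2 : kap h * δ^2 * (δ*β) ≤ (1/144)*(δ*β) :=
            mul_le_mul_of_nonneg_right hκδ2 (by positivity)
          have e3 : (1/144)*(δ*β) ≤ (1/144)*((1/8)*β) := by
            have := mul_le_mul_of_nonneg_right hδ8 hβ.le
            linarith
          nlinarith
  have q2 : |((4*h/3)*u - (h/3-1)*u^2)*B| ≤ (459/1024)*β := by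
    have hu2' : |u^2| ≤ 81/64 := by
      rw [abs_of_nonneg (sq_nonneg u)]; nlinarith [hu78.1, hu78.2]
    have t1 : |(4*h/3)*u| ≤ (4*|h|/3)*(9/8) := by
      have : |(4*h/3)| = 4*|h|/3 := by
        rw [show (4*h/3) = (4/3)*h by ring, abs_mul, abs_of_pos (by norm_num : (0:ℝ) < 4/3)]
        ring
      rw [abs_mul, this]
      exact mul_le_mul_of_nonneg_left hu' (by positivity)
    have t2 : |(h/3-1)*u^2| ≤ (|h|/3+1)*(81/64) := by
      have e : |h/3-1| ≤ |h|/3 + 1 := by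
        calc |h/3-1| ≤ |h/3| + |1| := abs_sub _ _
          _ = |h|/3 + 1 := by rw [abs_one, abs_div]; norm_num
      exact absMulLe e hu2'
    have hP : |(4*h/3)*u - (h/3-1)*u^2| ≤ (123/64)*|h| + 81/64 := by
      calc |(4*h/3)*u - (h/3-1)*u^2| ≤ |(4*h/3)*u| + |(h/3-1)*u^2| := abs_sub _ _
        _ ≤ (4*|h|/3)*(9/8) + (|h|/3+1)*(81/64) := add_le_add t1 t2
        _ = (123/64)*|h| + 81/64 := by ring
    calc |((4*h/3)*u - (h/3-1)*u^2)*B| ≤ ((123/64)*|h| + 81/64)*(9/8*β*δ) := by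
          apply absMulLe hP hBb
      _ = (1107/512)*(abs h*δ*β) + (729/512)*(δ*β) := by ring
      _ ≤ (1107/512)*((1/8)*β) + (729/512)*((1/8)*β) := by
          have e1 : abs h*δ*β ≤ (1/8)*β := by
            have := mul_le_mul_of_nonneg_right hhδ hβ.le; linarith
          have e2 : δ*β ≤ (1/8)*β := by
            have := mul_le_mul_of_nonneg_right hδ8 hβ.le; linarith
          linarith
      _ = (459/1024)*β := by ring
  have q3 : |(2*u^2+u^3)*(C-Q)| ≤ (2025/2048)*β := by
    have hcq : |C - Q| ≤ (1/4)*β := by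
      calc |C - Q| = |(C-β) - (Q-β)| := by congr 1; ring
        _ ≤ |C-β| + |Q-β| := abs_sub _ _
        _ ≤ (1/4)*β := by linarith
    have hcoeff : |2*u^2+u^3| ≤ 2025/512 := by
      rw [abs_of_nonneg (by nlinarith [hu78.1] : (0:ℝ) ≤ 2*u^2+u^3)]
      nlinarith [hu78.1, hu78.2]
    calc |(2*u^2+u^3)*(C-Q)| ≤ (2025/512)*((1/4)*β) := absMulLe hcoeff hcq
      _ = (2025/2048)*β := by ring
  have hTle : 2*U1 h f u - U2 h f u ≤ 3*(kap h + (285/512)*β) := by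
    rw [hTeq]
    rw [abs_le] at q1 q2 q3
    linarith [q1.2, q2.2, q3.2]
  simp only [V1]
  rw [div_le_iff₀ hU1pos]
  linarith [hU1lower]

/-- strict ordering of the principal stretches for solutions of the
radial equation: `φ' > φ(r)/r > 1` when `μ > 0`, and the reversed inequalities when
`μ < 0`. -/
theorem principal_stretch_ordering
    (h M : ℝ) (hκ : 0 < kap h) (hM : 0 ≤ M)
    (f : ℝ → ℝ) (hf : CM M f) (μ : ℝ)
    (φ : ℝ → ℝ)
    (hφC2 : ContDiffOn ℝ 2 φ (Set.Icc 0 1))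
    (hφ0 : φ 0 = 0) (hφ'0 : lam1 φ 0 = 1)
    (hφ''0 : derivWithin (lam1 φ) (Set.Icc 0 1) 0 = 0)
    (hφpos : ∀ r ∈ Set.Ioc (0:ℝ) 1, 0 < φ r)
    (hu : ∀ r ∈ Set.Icc (0:ℝ) 1, uu φ r ∈ Uset (del h M))
    (hODE : ∀ r ∈ Set.Ioc (0:ℝ) 1,
      derivWithin (lam1 φ) (Set.Icc 0 1) r + (2 / r) * (lam1 φ r - φ r / r)
        = V1 h f (uu φ r) * (1 / r) * (lam1 φ r - φ r / r)
          + μ * (kap h + d2 f 1)⁻¹ * r * (vv φ r) ^ (1 - h / 3) * V2 h f (uu φ r)) :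
    (0 < μ → ∀ r ∈ Set.Ioc (0:ℝ) 1, φ r / r < lam1 φ r ∧ 1 < φ r / r) ∧
    (μ < 0 → ∀ r ∈ Set.Ioc (0:ℝ) 1, lam1 φ r < φ r / r ∧ φ r / r < 1) := by
  have hβ : 0 < d2 f 1 := hf.2.2.2.1
  have hh : h ≠ 0 := by
    intro h0
    rw [h0] at hκ
    norm_num [kap] at hκ
  obtain ⟨hδ0, hδ8, hhδ, hhM⟩ := delFacts h M hh hM
  have hB := fBounds h M f hκ hM hf hh
  have hudiff : UniqueDiffOn ℝ (Set.Icc (0:ℝ) 1) := uniqueDiffOn_Icc one_pos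
  have hφdiff : DifferentiableOn ℝ φ (Set.Icc 0 1) := hφC2.differentiableOn two_ne_zero
  have hlam1cont : ContinuousOn (lam1 φ) (Set.Icc 0 1) :=
    hφC2.continuousOn_derivWithin hudiff one_le_two
  have hlam1diff : DifferentiableOn ℝ (lam1 φ) (Set.Icc 0 1) :=
    (hφC2.derivWithin (m := 1) hudiff (by norm_num)).differentiableOn one_ne_zero
  have hlam20 : lam2 φ 0 = 1 := by simp [lam2]
  have hlam2eq : ∀ r : ℝ, r ≠ 0 → lam2 φ r = φ r / r := fun r hr => if_neg hr
  -- continuity of lam2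
  have hlam2cont : ContinuousOn (lam2 φ) (Set.Icc 0 1) := by
    intro x hx
    rcases eq_or_ne x 0 with rfl | hx0
    · have hd : HasDerivWithinAt φ 1 (Set.Icc 0 1) 0 := by
        have := (hφdiff 0 ⟨le_rfl, zero_le_one⟩).hasDerivWithinAt
        rwa [show derivWithin φ (Set.Icc 0 1) 0 = 1 from hφ'0] at this
      rw [hasDerivWithinAt_iff_tendsto_slope] at hd
      rw [← continuousWithinAt_diff_self]
      have heq : ∀ᶠ y in nhdsWithin 0 (Set.Icc 0 1 \ {(0:ℝ)}),
          slope φ 0 y = lam2 φ y := by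
        filter_upwards [self_mem_nhdsWithin] with y hy
        rw [slope_def_field, hlam2eq y hy.2, hφ0, sub_zero, sub_zero]
      have : Filter.Tendsto (lam2 φ) (nhdsWithin 0 (Set.Icc 0 1 \ {(0:ℝ)}))
          (nhds 1) := Filter.Tendsto.congr' heq hd
      rw [ContinuousWithinAt, hlam20]
      exact this
    · have hxpos : 0 < x := lt_of_le_of_ne hx.1 (Ne.symm hx0)
      have hc : ContinuousWithinAt (fun y => φ y / y) (Set.Icc 0 1) x :=
        (hφC2.continuousOn x hx).div continuousWithinAt_id hx0
      apply hc.congr_of_eventuallyEq _ (hlam2eq x hx0)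
      filter_upwards [nhdsWithin_le_nhds (eventually_ne_nhds hx0)] with y hy
      exact hlam2eq y hy
  -- positivity facts on (0,1]
  have hlam2pos : ∀ r ∈ Set.Ioc (0:ℝ) 1, 0 < lam2 φ r := fun r hr => by
    rw [hlam2eq r (ne_of_gt hr.1)]
    exact div_pos (hφpos r hr) hr.1
  have huu : ∀ r ∈ Set.Ioc (0:ℝ) 1, uu φ r ∈ Uset (del h M) :=
    fun r hr => hu r ⟨hr.1.le, hr.2⟩
  have huu78 : ∀ r ∈ Set.Ioc (0:ℝ) 1, 7/8 ≤ uu φ r := by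
    intro r hr
    have := huu r hr
    simp only [Uset, mem_Icc] at this
    linarith [this.1]
  have hlam1pos : ∀ r ∈ Set.Ioc (0:ℝ) 1, 0 < lam1 φ r := by
    intro r hr
    have h2 := hlam2pos r hr
    have h7 := huu78 r hr
    have heq : lam1 φ r = uu φ r * lam2 φ r := by
      rw [uu]; field_simp
    rw [heq]
    nlinarith
  have hvvpos : ∀ r ∈ Set.Ioc (0:ℝ) 1, 0 < vv φ r := fun r hr => by
    rw [vv]; exact mul_pos (hlam1pos r hr) (pow_pos (hlam2pos r hr) 2)
  have hU1pos : ∀ r ∈ Set.Ioc (0:ℝ) 1, 0 < U1 h f (uu φ r) := by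
    intro r hr
    have := (hB _ (huu r hr)).1
    nlinarith
  -- the μ-free forcing term
  set G : ℝ → ℝ := fun r =>
    (kap h + d2 f 1)⁻¹ * r * (vv φ r) ^ (1 - h / 3) * V2 h f (uu φ r) with hGdef
  have hGpos : ∀ r ∈ Set.Ioc (0:ℝ) 1, 0 < G r := by
    intro r hr
    have h1 : 0 < (kap h + d2 f 1)⁻¹ := by positivity
    have h2 : (0:ℝ) < (vv φ r) ^ (1 - h / 3) := Real.rpow_pos_of_pos (hvvpos r hr) _
    have h3 : 0 < V2 h f (uu φ r) := by
      rw [V2]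
      apply div_pos _ (hU1pos r hr)
      have := huu78 r hr
      nlinarith
    have := hr.1
    positivity
  -- derivative of lam2
  have hlam2d : ∀ r ∈ Set.Ioc (0:ℝ) 1,
      HasDerivWithinAt (lam2 φ) ((lam1 φ r - lam2 φ r) / r) (Set.Icc 0 1) r := by
    intro r hr
    have hr0 : r ≠ 0 := ne_of_gt hr.1
    have hφd : HasDerivWithinAt φ (lam1 φ r) (Set.Icc 0 1) r :=
      (hφdiff r ⟨hr.1.le, hr.2⟩).hasDerivWithinAt
    have hdiv : HasDerivWithinAt (fun y => φ y / y)
        ((lam1 φ r * r - φ r * 1) / r ^ 2) (Set.Icc 0 1) r :=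
      hφd.div (hasDerivWithinAt_id r _) hr0
    have hcong : HasDerivWithinAt (lam2 φ)
        ((lam1 φ r * r - φ r * 1) / r ^ 2) (Set.Icc 0 1) r := by
      apply hdiv.congr_of_eventuallyEq _ (hlam2eq r hr0)
      filter_upwards [nhdsWithin_le_nhds (eventually_ne_nhds hr0)] with y hy
      exact hlam2eq y hy
    convert hcong using 1
    rw [hlam2eq r hr0]
    rw [div_eq_div_iff hr0 (pow_ne_zero 2 hr0)]
    field_simp
  -- derivative of ψ = lam1 - lam2 in ODE form
  have hder : ∀ r ∈ Set.Ioc (0:ℝ) 1,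
      HasDerivWithinAt (fun r => lam1 φ r - lam2 φ r)
        ((V1 h f (uu φ r) - 3) / r * (lam1 φ r - lam2 φ r) + μ * G r)
        (Set.Icc 0 1) r := by
    intro r hr
    have hr0 : r ≠ 0 := ne_of_gt hr.1
    have hlam1d : HasDerivWithinAt (lam1 φ)
        (derivWithin (lam1 φ) (Set.Icc 0 1) r) (Set.Icc 0 1) r :=
      (hlam1diff r ⟨hr.1.le, hr.2⟩).hasDerivWithinAt
    have hsub := hlam1d.sub (hlam2d r hr)
    refine hsub.congr_deriv ?_
    have hode := hODE r hr
    rw [← hlam2eq r hr0] at hode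
    simp only [hGdef]
    linear_combination hode
  -- the two directions
  constructor
  · intro hμ
    have hψpos := posAux (fun r => lam1 φ r - lam2 φ r)
      (fun r => μ * G r) (fun r => (V1 h f (uu φ r) - 3) / r)
      (hlam1cont.sub hlam2cont) (by show lam1 φ 0 - lam2 φ 0 = 0; rw [hφ'0, hlam20]; ring)
      hder
      (fun r hr => div_nonpos_of_nonpos_of_nonneg
        (by linarith [(hB _ (huu r hr)).2]) hr.1.le)
      (fun r hr => mul_pos hμ (hGpos r hr))
    -- strict monotonicity of lam2
    have hmono : StrictMonoOn (lam2 φ) (Set.Icc 0 1) := by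
      apply strictMonoOn_of_deriv_pos (convex_Icc _ _) hlam2cont
      intro x hx
      rw [interior_Icc] at hx
      have hxIoc : x ∈ Set.Ioc (0:ℝ) 1 := ⟨hx.1, hx.2.le⟩
      have hmem : Set.Icc (0:ℝ) 1 ∈ nhds x := Icc_mem_nhds hx.1 hx.2
      have hda := (hlam2d x hxIoc).hasDerivAt hmem
      rw [hda.deriv]
      have hb : 0 < lam1 φ x - lam2 φ x := hψpos x hxIoc
      exact div_pos hb hx.1
    intro r hr
    have h1 : 0 < lam1 φ r - lam2 φ r := hψpos r hr
    have h2 : lam2 φ 0 < lam2 φ r :=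
      hmono ⟨le_rfl, zero_le_one⟩ ⟨hr.1.le, hr.2⟩ hr.1
    rw [hlam20] at h2
    rw [← hlam2eq r (ne_of_gt hr.1)]
    exact ⟨by linarith, h2⟩
  · intro hμ
    have hψpos := posAux (fun r => lam2 φ r - lam1 φ r)
      (fun r => -(μ * G r)) (fun r => (V1 h f (uu φ r) - 3) / r)
      (hlam2cont.sub hlam1cont) (by show lam2 φ 0 - lam1 φ 0 = 0; rw [hφ'0, hlam20]; ring)
      (by
        intro r hr
        have hneg := (hder r hr).neg
        have heq : (-fun x => lam1 φ x - lam2 φ x) = (fun x => lam2 φ x - lam1 φ x) := by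
          funext x; simp only [Pi.neg_apply]; ring
        rw [heq] at hneg
        refine hneg.congr_deriv ?_
        show _ = (V1 h f (uu φ r) - 3)/r * (lam2 φ r - lam1 φ r) + -(μ * G r)
        ring)
      (fun r hr => div_nonpos_of_nonpos_of_nonneg
        (by linarith [(hB _ (huu r hr)).2]) hr.1.le)
      (fun r hr => by show (0:ℝ) < -(μ * G r); nlinarith [hGpos r hr])
    have hmono : StrictAntiOn (lam2 φ) (Set.Icc 0 1) := by
      apply strictAntiOn_of_deriv_neg (convex_Icc _ _) hlam2cont
      intro x hx
      rw [interior_Icc] at hx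
      have hxIoc : x ∈ Set.Ioc (0:ℝ) 1 := ⟨hx.1, hx.2.le⟩
      have hmem : Set.Icc (0:ℝ) 1 ∈ nhds x := Icc_mem_nhds hx.1 hx.2
      have hda := (hlam2d x hxIoc).hasDerivAt hmem
      rw [hda.deriv]
      have hb : 0 < lam2 φ x - lam1 φ x := hψpos x hxIoc
      apply div_neg_of_neg_of_pos (by linarith) hx.1
    intro r hr
    have h1 : 0 < lam2 φ r - lam1 φ r := hψpos r hr
    have h2 : lam2 φ r < lam2 φ 0 :=
      hmono ⟨le_rfl, zero_le_one⟩ ⟨hr.1.le, hr.2⟩ hr.1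
    rw [hlam20] at h2
    rw [← hlam2eq r (ne_of_gt hr.1)]
    exact ⟨by linarith, h2⟩
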